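/- The graph of (−1)-classes of the dP_5 lattice has 16 vertices and is strongly regular with parameters (16, 5, 0, 2): every vertex has exactly 5 neighbours, adjacent vertices have no common neighbour (the graph is triangle-free), and non-adjacent vertices have exactly 2 common neighbours (this is the Clebsch graph); its automorphism group has order 1920. -/

import Mathlib

namespace Stmt10

/-- Intersection form of the dP₅ lattice `ℤ⁶` with basis `l, e₁, …, e₅`. -/
def dot (x y : Fin 6 → ℤ) : ℤ := x 0 * y 0 - ∑ i : Fin 5, x i.succ * y i.succ

/-- The canonical class `K = -3l + e₁ + ⋯ + e₅`. -/
def K : Fin 6 → ℤ := fun i => if i = 0 then -3 else 1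

theorem dot_comm (x y : Fin 6 → ℤ) : dot x y = dot y x := by
  unfold dot
  congr 1
  · ring
  · exact Finset.sum_congr rfl fun i _ => mul_comm _ _

/-- The type of (−1)-classes of the dP₅ lattice. -/
def NegClass := {v : Fin 6 → ℤ // dot v v = -1 ∧ dot v K = -1}

/-- The graph of (−1)-classes of the dP₅ lattice. -/
def G : SimpleGraph NegClass where
  Adj v w := v ≠ w ∧ 1 ≤ dot v.1 w.1
  symm := ⟨by rintro v w ⟨h1, h2⟩; exact ⟨h1.symm, by rwa [dot_comm]⟩⟩
  loopless := ⟨fun v h => h.1 rfl⟩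

/-- The automorphism group of the graph `G`. -/
def Aut : Subgroup (Equiv.Perm NegClass) where
  carrier := {π | ∀ v w, G.Adj (π v) (π w) ↔ G.Adj v w}
  one_mem' := fun _ _ => Iff.rfl
  mul_mem' := by
    intro a b ha hb v w
    exact (ha (b v) (b w)).trans (hb v w)
  inv_mem' := by
    intro a ha v w
    simpa using (ha (a⁻¹ v) (a⁻¹ w)).symm

def V : Fin 16 → Fin 6 → ℤ :=
  ![![0,1,0,0,0,0], ![0,0,1,0,0,0], ![0,0,0,1,0,0], ![0,0,0,0,1,0], ![0,0,0,0,0,1],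
    ![1,-1,-1,0,0,0], ![1,-1,0,-1,0,0], ![1,-1,0,0,-1,0], ![1,-1,0,0,0,-1],
    ![1,0,-1,-1,0,0], ![1,0,-1,0,-1,0], ![1,0,-1,0,0,-1], ![1,0,0,-1,-1,0],
    ![1,0,0,-1,0,-1], ![1,0,0,0,-1,-1], ![2,-1,-1,-1,-1,-1]]

def adjN : Fin 16 → ℕ :=
  ![33248, 36384, 45632, 54400, 59648, 28675, 19461, 10761, 5649, 16774, 8522, 4306,
    2348, 1204, 632, 31]

def adjB (i j : Fin 16) : Bool := (adjN i >>> (j : ℕ)) % 2 == 1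

def pr : Fin 5 → Fin 5 → Fin 16 :=
  ![![0,5,6,7,8], ![5,0,9,10,11], ![6,9,0,12,13], ![7,10,12,0,14], ![8,11,13,14,0]]

def n5 (k : Fin 5) : Fin 16 := ⟨k.1, by omega⟩

def F (f : Fin 5 → Fin 5) : Fin 16 → Fin 16 :=
  ![n5 (f 0), n5 (f 1), n5 (f 2), n5 (f 3), n5 (f 4),
    pr (f 0) (f 1), pr (f 0) (f 2), pr (f 0) (f 3), pr (f 0) (f 4),
    pr (f 1) (f 2), pr (f 1) (f 3), pr (f 1) (f 4),
    pr (f 2) (f 3), pr (f 2) (f 4), pr (f 3) (f 4), 15]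

def BIG : ℕ := 1456810550362312582867086326728129084239175258294244282977200032170120480168545607248621492813699709663692943187181176879701954509800478529269374323641818556518541776224937740254574215644943193092543506103121249523411856907845171728298868644762528084919073211227372308774929865900191436449221135391782403252545762818850902310317981015059621996901376232012956780107059116238821867625975920687606351026963291138051862921001333014545746701856472872121491144353466815256996414470303052669004207715175605815648184132155298674806547980266156344968

def perm120 (p : Fin 120) (k : Fin 5) : Fin 5 :=
  ⟨(BIG >>> (15 * p.1 + 3 * k.1)) % 8 % 5, Nat.mod_lt _ (by norm_num)⟩

def gt : Fin 16 → Fin 16 → Fin 16 :=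
  ![![5, 6, 7, 8, 15, 14, 13, 12, 1, 11, 10, 2, 9, 3, 4, 0],
    ![5, 9, 10, 11, 15, 14, 13, 12, 0, 8, 7, 2, 6, 3, 4, 1],
    ![6, 9, 12, 13, 15, 14, 11, 10, 0, 8, 7, 1, 5, 3, 4, 2],
    ![7, 10, 12, 14, 15, 13, 11, 9, 0, 8, 6, 1, 5, 2, 4, 3],
    ![8, 11, 13, 14, 15, 12, 10, 9, 0, 7, 6, 1, 5, 2, 3, 4],
    ![0, 1, 12, 13, 14, 15, 8, 7, 6, 11, 10, 9, 2, 3, 4, 5],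
    ![0, 2, 10, 11, 14, 15, 8, 7, 5, 13, 12, 9, 1, 3, 4, 6],
    ![0, 3, 9, 11, 13, 15, 8, 6, 5, 14, 12, 10, 1, 2, 4, 7],
    ![0, 4, 9, 10, 12, 15, 7, 6, 5, 14, 13, 11, 1, 2, 3, 8],
    ![1, 2, 7, 8, 14, 15, 11, 10, 5, 13, 12, 6, 0, 3, 4, 9],
    ![1, 3, 6, 8, 13, 15, 11, 9, 5, 14, 12, 7, 0, 2, 4, 10],
    ![1, 4, 6, 7, 12, 15, 10, 9, 5, 14, 13, 8, 0, 2, 3, 11],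
    ![2, 3, 5, 8, 11, 15, 13, 9, 6, 14, 10, 7, 0, 1, 4, 12],
    ![2, 4, 5, 7, 10, 15, 12, 9, 6, 14, 11, 8, 0, 1, 3, 13],
    ![3, 4, 5, 6, 9, 15, 12, 10, 7, 13, 11, 8, 0, 1, 2, 14],
    ![0, 1, 2, 3, 4, 5, 6, 7, 8, 9, 10, 11, 12, 13, 14, 15]]

lemma helper (v : Fin 6 → ℤ) {c0 c1 c2 c3 c4 c5 : ℤ}
    (h0 : v 0 = c0) (h1 : v 1 = c1) (h2 : v 2 = c2) (h3 : v 3 = c3) (h4 : v 4 = c4)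
    (h5 : v 5 = c5)
    (h : ∃ i, (fun j => ![c0,c1,c2,c3,c4,c5] j) = V i) : ∃ i, v = V i := by
  obtain ⟨i, hi⟩ := h
  refine ⟨i, ?_⟩
  funext j
  rw [← hi]
  fin_cases j <;> simp [h0, h1, h2, h3, h4, h5] <;> rfl

set_option maxHeartbeats 1000000 in
lemma classify (v : Fin 6 → ℤ) (hv1 : dot v v = -1) (hv2 : dot v K = -1) :
    ∃ i, v = V i := by
  obtain ⟨a, b, c, d, e, f, h0, h1, h2, h3, h4, h5⟩ :
      ∃ a b c d e f, v 0 = a ∧ v 1 = b ∧ v 2 = c ∧ v 3 = d ∧ v 4 = e ∧ v 5 = f :=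
    ⟨_, _, _, _, _, _, rfl, rfl, rfl, rfl, rfl, rfl⟩
  have hQS : v 0 * v 0 - (v 1 * v 1 + v 2 * v 2 + v 3 * v 3 + v 4 * v 4 + v 5 * v 5) = -1 ∧
      v 1 + v 2 + v 3 + v 4 + v 5 = 1 - 3 * v 0 := by
    simp only [dot, K, Fin.sum_univ_five,
      show (Fin.succ 0 : Fin 6) = 1 from rfl, show (Fin.succ 1 : Fin 6) = 2 from rfl,
      show (Fin.succ 2 : Fin 6) = 3 from rfl, show (Fin.succ 3 : Fin 6) = 4 from rfl,
      show (Fin.succ 4 : Fin 6) = 5 from rfl,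
      show ((1:Fin 6) = 0) = False from by simp, show ((2:Fin 6) = 0) = False from by simp,
      show ((3:Fin 6) = 0) = False from by simp, show ((4:Fin 6) = 0) = False from by simp,
      show ((5:Fin 6) = 0) = False from by simp, if_true, if_false, if_pos rfl] at hv1 hv2
    norm_num at hv1 hv2
    constructor <;> linarith
  rw [h0, h1, h2, h3, h4, h5] at hQS
  obtain ⟨hQ, hS⟩ := hQS
  have hC : (b+c+d+e+f)^2 ≤ 5*(a^2+1) := by
    nlinarith [sq_nonneg (b-c), sq_nonneg (b-d), sq_nonneg (b-e), sq_nonneg (b-f),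
      sq_nonneg (c-d), sq_nonneg (c-e), sq_nonneg (c-f), sq_nonneg (d-e), sq_nonneg (d-f),
      sq_nonneg (e-f)]
  rw [hS] at hC
  have ha0 : 0 ≤ a := by
    by_contra h
    push_neg at h
    have h' : a ≤ -1 := by omega
    nlinarith [sq_nonneg a]
  have ha2 : a ≤ 2 := by
    by_contra h
    push_neg at h
    have h' : 3 ≤ a := by omega
    nlinarith [sq_nonneg a]
  have key0 : ∀ x : ℤ, 0 ≤ x * (x - 1) := fun x => by nlinarith [sq_nonneg (2*x - 1)]
  have key1 : ∀ x : ℤ, 0 ≤ x * (x + 1) := fun x => by nlinarith [sq_nonneg (2*x + 1)]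
  have zo : ∀ x : ℤ, x * (x - 1) = 0 → x = 0 ∨ x = 1 := by
    intro x hx; rcases mul_eq_zero.mp hx with h | h
    · exact Or.inl h
    · exact Or.inr (by omega)
  have zo' : ∀ x : ℤ, x * (x + 1) = 0 → x = 0 ∨ x = -1 := by
    intro x hx; rcases mul_eq_zero.mp hx with h | h
    · exact Or.inl h
    · exact Or.inr (by omega)
  clear hv1 hv2
  interval_cases a
  · -- a = 0
    have hb := zo b (le_antisymm (by linarith [key0 c, key0 d, key0 e, key0 f]) (key0 b))
    have hc := zo c (le_antisymm (by linarith [key0 b, key0 d, key0 e, key0 f]) (key0 c))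
    have hd := zo d (le_antisymm (by linarith [key0 b, key0 c, key0 e, key0 f]) (key0 d))
    have he := zo e (le_antisymm (by linarith [key0 b, key0 c, key0 d, key0 f]) (key0 e))
    have hf := zo f (le_antisymm (by linarith [key0 b, key0 c, key0 d, key0 e]) (key0 f))
    rcases hb with rfl | rfl <;> rcases hc with rfl | rfl <;> rcases hd with rfl | rfl <;>
      rcases he with rfl | rfl <;> rcases hf with rfl | rfl <;>
      first
        | omega
        | exact helper v h0 h1 h2 h3 h4 h5 (by decide)
  · -- a = 1
    have hb := zo' b (le_antisymm (by linarith [key1 c, key1 d, key1 e, key1 f]) (key1 b))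
    have hc := zo' c (le_antisymm (by linarith [key1 b, key1 d, key1 e, key1 f]) (key1 c))
    have hd := zo' d (le_antisymm (by linarith [key1 b, key1 c, key1 e, key1 f]) (key1 d))
    have he := zo' e (le_antisymm (by linarith [key1 b, key1 c, key1 d, key1 f]) (key1 e))
    have hf := zo' f (le_antisymm (by linarith [key1 b, key1 c, key1 d, key1 e]) (key1 f))
    rcases hb with rfl | rfl <;> rcases hc with rfl | rfl <;> rcases hd with rfl | rfl <;>
      rcases he with rfl | rfl <;> rcases hf with rfl | rfl <;>
      first
        | omega
        | exact helper v h0 h1 h2 h3 h4 h5 (by decide)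
  · -- a = 2
    have hb : b = -1 := by
      have hle : (b+1)^2 ≤ 0 := by
        linarith [sq_nonneg (b+1), sq_nonneg (c+1), sq_nonneg (d+1), sq_nonneg (e+1), sq_nonneg (f+1)]
      have := sq_eq_zero_iff.mp (le_antisymm hle (sq_nonneg (b+1))); omega
    have hc : c = -1 := by
      have hle : (c+1)^2 ≤ 0 := by
        linarith [sq_nonneg (c+1), sq_nonneg (b+1), sq_nonneg (d+1), sq_nonneg (e+1), sq_nonneg (f+1)]
      have := sq_eq_zero_iff.mp (le_antisymm hle (sq_nonneg (c+1))); omega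
    have hd : d = -1 := by
      have hle : (d+1)^2 ≤ 0 := by
        linarith [sq_nonneg (d+1), sq_nonneg (b+1), sq_nonneg (c+1), sq_nonneg (e+1), sq_nonneg (f+1)]
      have := sq_eq_zero_iff.mp (le_antisymm hle (sq_nonneg (d+1))); omega
    have he : e = -1 := by
      have hle : (e+1)^2 ≤ 0 := by
        linarith [sq_nonneg (e+1), sq_nonneg (b+1), sq_nonneg (c+1), sq_nonneg (d+1), sq_nonneg (f+1)]
      have := sq_eq_zero_iff.mp (le_antisymm hle (sq_nonneg (e+1))); omega
    have hf : f = -1 := by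
      have hle : (f+1)^2 ≤ 0 := by
        linarith [sq_nonneg (f+1), sq_nonneg (b+1), sq_nonneg (c+1), sq_nonneg (d+1), sq_nonneg (e+1)]
      have := sq_eq_zero_iff.mp (le_antisymm hle (sq_nonneg (f+1))); omega
    subst hb hc hd he hf
    exact helper v h0 h1 h2 h3 h4 h5 (by decide)

/-! ### Basic decidable facts -/

lemma hV : ∀ i, dot (V i) (V i) = -1 ∧ dot (V i) K = -1 := by decide

lemma hAdjB : ∀ i j : Fin 16, (i ≠ j ∧ 1 ≤ dot (V i) (V j)) ↔ adjB i j = true := by decide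

lemma deg5 : ∀ i : Fin 16, (Finset.univ.filter (fun j => adjB i j = true)).card = 5 := by
  decide

lemma lam0 : ∀ i j : Fin 16, adjB i j = true →
    (Finset.univ.filter (fun u => adjB i u = true ∧ adjB j u = true)).card = 0 := by decide

lemma mu2 : ∀ i j : Fin 16, i ≠ j → adjB i j = false →
    (Finset.univ.filter (fun u => adjB i u = true ∧ adjB j u = true)).card = 2 := by decide

lemma adj_sym : ∀ i j : Fin 16, adjB i j = adjB j i := by decide

lemma nbr15 : ∀ j : Fin 16, adjB 15 j = true ↔ j.1 < 5 := by decide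

lemma nbr_nonadj : ∀ k l : Fin 5, k ≠ l → adjB (n5 k) (n5 l) = false := by decide

lemma n5_inj : Function.Injective n5 := by
  intro k l h
  have h' := congrArg Fin.val h
  exact Fin.ext h'

lemma two_nbrs : ∀ u : Fin 16, u ≠ 15 → adjB 15 u = false →
    ∃ k l : Fin 5, k ≠ l ∧ adjB (n5 k) u = true ∧ adjB (n5 l) u = true := by decide

lemma hgt : ∀ t : Fin 16, (∀ x y, adjB (gt t x) (gt t y) = adjB x y) ∧
    Function.Injective (gt t) ∧ gt t 15 = t := by decide

set_option maxRecDepth 100000 in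
set_option maxHeartbeats 4000000 in
lemma hperm120 : ∀ p : Fin 120,
    (∀ x y, adjB (F (perm120 p) x) (F (perm120 p) y) = adjB x y) ∧
    Function.Injective (F (perm120 p)) ∧
    (∀ k, F (perm120 p) (n5 k) = n5 (perm120 p k)) ∧ F (perm120 p) 15 = 15 := by decide

set_option maxRecDepth 100000 in
set_option maxHeartbeats 4000000 in
lemma hperm120inj : ∀ p q : Fin 120, perm120 p = perm120 q → p = q := by decide

set_option maxRecDepth 100000 in
set_option maxHeartbeats 4000000 in
lemma hperm120injf : ∀ p, Function.Injective (perm120 p) := by decide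

lemma Vinj : Function.Injective V := by
  have h : ∀ i j : Fin 16, V i = V j → i = j := by decide
  exact fun i j hij => h i j hij

/-! ### The equivalence `NegClass ≃ Fin 16` -/

def g16 : Fin 16 → NegClass := fun i => ⟨V i, hV i⟩

lemma g16_bij : Function.Bijective g16 := by
  constructor
  · intro i j h
    exact Vinj (congrArg Subtype.val h)
  · intro v
    obtain ⟨i, hi⟩ := classify v.1 v.2.1 v.2.2
    exact ⟨i, Subtype.ext hi.symm⟩

noncomputable def e : NegClass ≃ Fin 16 := (Equiv.ofBijective g16 g16_bij).symm

lemma hVe : ∀ v : NegClass, V (e v) = v.1 := fun v =>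
  congrArg Subtype.val (Equiv.apply_symm_apply (Equiv.ofBijective g16 g16_bij) v)

lemma adjT (v w : NegClass) : G.Adj v w ↔ adjB (e v) (e w) = true := by
  rw [← hAdjB]
  show (v ≠ w ∧ 1 ≤ dot v.1 w.1) ↔ _
  constructor
  · rintro ⟨h1, h2⟩
    refine ⟨fun h => h1 (e.injective h), ?_⟩
    rw [hVe, hVe]; exact h2
  · rintro ⟨h1, h2⟩
    rw [hVe, hVe] at h2
    exact ⟨fun h => h1 (congrArg e h), h2⟩

lemma img1 (v : NegClass) : e '' {w | G.Adj v w} = {j | adjB (e v) j = true} := by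
  ext j
  constructor
  · rintro ⟨w, hw, rfl⟩
    exact (adjT v w).mp hw
  · intro hj
    refine ⟨e.symm j, (adjT v _).mpr ?_, Equiv.apply_symm_apply e j⟩
    rwa [Equiv.apply_symm_apply]

lemma img2 (v w : NegClass) : e '' {u | G.Adj v u ∧ G.Adj w u} =
    {x | adjB (e v) x = true ∧ adjB (e w) x = true} := by
  ext j
  constructor
  · rintro ⟨u, ⟨h1, h2⟩, rfl⟩
    exact ⟨(adjT v u).mp h1, (adjT w u).mp h2⟩
  · rintro ⟨h1, h2⟩
    refine ⟨e.symm j, ⟨(adjT v _).mpr ?_, (adjT w _).mpr ?_⟩, Equiv.apply_symm_apply e j⟩ <;>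
      rwa [Equiv.apply_symm_apply]

lemma setOf_adjB_eq (P : Fin 16 → Prop) [DecidablePred P] :
    {j | P j} = ↑(Finset.univ.filter (fun j => P j)) := by
  ext x; simp

/-! ### The graph automorphisms of `adjB` -/

/-- The automorphism group of the graph given by `adjB` on `Fin 16`. -/
def Aut16 : Subgroup (Equiv.Perm (Fin 16)) where
  carrier := {π | ∀ v w, adjB (π v) (π w) = adjB v w}
  one_mem' := fun _ _ => rfl
  mul_mem' := by
    intro a b ha hb v w
    exact (ha (b v) (b w)).trans (hb v w)
  inv_mem' := by
    intro a ha v w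
    have := ha (a⁻¹ v) (a⁻¹ w)
    simpa using this.symm

lemma mem_Aut16_iff (π : Equiv.Perm (Fin 16)) :
    π ∈ Aut16 ↔ ∀ v w, adjB (π v) (π w) = adjB v w := Iff.rfl

lemma mem_Aut_iff (π : Equiv.Perm NegClass) :
    π ∈ Aut ↔ ∀ v w, G.Adj (π v) (π w) ↔ G.Adj v w := Iff.rfl

/-- Uniqueness: an automorphism is determined by its values on `15` and its
neighbours `n5 k`. -/
lemma unique_ext (π π' : Equiv.Perm (Fin 16))
    (hπ : ∀ x y, adjB (π x) (π y) = adjB x y)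
    (hπ' : ∀ x y, adjB (π' x) (π' y) = adjB x y)
    (h0 : π 15 = π' 15) (hn : ∀ k : Fin 5, π (n5 k) = π' (n5 k)) : π = π' := by
  ext u
  by_cases hu : u = (15 : Fin 16)
  · rw [hu]; exact congrArg Fin.val h0
  by_cases hnb : adjB 15 u = true
  · have hlt : u.1 < 5 := (nbr15 u).mp hnb
    have hun : u = n5 ⟨u.1, hlt⟩ := rfl
    rw [hun]
    exact congrArg Fin.val (hn ⟨u.1, hlt⟩)
  · have hnb' : adjB 15 u = false := by
      cases h : adjB 15 u
      · rfl
      · exact absurd h hnb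
    obtain ⟨k, l, hkl, hku, hlu⟩ := two_nbrs u hu hnb'
    have hab : n5 k ≠ n5 l := fun h => hkl (n5_inj h)
    have hab' : adjB (n5 k) (n5 l) = false := nbr_nonadj k l hkl
    have h15a : adjB (n5 k) 15 = true := by
      rw [adj_sym]
      exact (nbr15 (n5 k)).mpr k.2
    have h15b : adjB (n5 l) 15 = true := by
      rw [adj_sym]
      exact (nbr15 (n5 l)).mpr l.2
    have hScard : (Finset.univ.filter
        (fun x => adjB (π (n5 k)) x = true ∧ adjB (π (n5 l)) x = true)).card = 2 := by
      apply mu2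
      · intro h
        exact hab (π.injective h)
      · rw [hπ]; exact hab'
    have hmem15 : π 15 ∈ Finset.univ.filter
        (fun x => adjB (π (n5 k)) x = true ∧ adjB (π (n5 l)) x = true) := by
      simp only [Finset.mem_filter, Finset.mem_univ, true_and]
      exact ⟨by rw [hπ]; exact h15a, by rw [hπ]; exact h15b⟩
    have hmemu : π u ∈ Finset.univ.filter
        (fun x => adjB (π (n5 k)) x = true ∧ adjB (π (n5 l)) x = true) := by
      simp only [Finset.mem_filter, Finset.mem_univ, true_and]
      exact ⟨by rw [hπ]; exact hku, by rw [hπ]; exact hlu⟩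
    have hmemu' : π' u ∈ Finset.univ.filter
        (fun x => adjB (π (n5 k)) x = true ∧ adjB (π (n5 l)) x = true) := by
      simp only [Finset.mem_filter, Finset.mem_univ, true_and]
      constructor
      · rw [hn k, hπ']; exact hku
      · rw [hn l, hπ']; exact hlu
    have hne : π 15 ≠ π u := fun h => hu (π.injective h).symm
    have hpair : ({π 15, π u} : Finset (Fin 16)) ⊆ Finset.univ.filter
        (fun x => adjB (π (n5 k)) x = true ∧ adjB (π (n5 l)) x = true) := by
      intro x hx
      rcases Finset.mem_insert.mp hx with h | h
      · rw [h]; exact hmem15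
      · rw [Finset.mem_singleton.mp h]; exact hmemu
    have heq : ({π 15, π u} : Finset (Fin 16)) = Finset.univ.filter
        (fun x => adjB (π (n5 k)) x = true ∧ adjB (π (n5 l)) x = true) :=
      Finset.eq_of_subset_of_card_le hpair (by rw [hScard, Finset.card_pair hne])
    rw [← heq] at hmemu'
    rcases Finset.mem_insert.mp hmemu' with h | h
    · exfalso
      rw [h0] at h
      exact hu (π'.injective h)
    · exact (congrArg Fin.val (Finset.mem_singleton.mp h)).symm

/-! ### Elements of `Aut16` -/

noncomputable def gp (t : Fin 16) : ↥Aut16 :=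
  ⟨Equiv.ofBijective (gt t) (Finite.injective_iff_bijective.mp (hgt t).2.1),
   fun x y => (hgt t).1 x y⟩

noncomputable def Fa (p : Fin 120) : ↥Aut16 :=
  ⟨Equiv.ofBijective (F (perm120 p)) (Finite.injective_iff_bijective.mp (hperm120 p).2.1),
   fun x y => (hperm120 p).1 x y⟩

lemma gp_apply (t : Fin 16) (x : Fin 16) : (gp t).1 x = gt t x := rfl
lemma Fa_apply (p : Fin 120) (x : Fin 16) : (Fa p).1 x = F (perm120 p) x := rfl

def embOf (p : Fin 120) : Fin 5 ↪ Fin 5 := ⟨perm120 p, hperm120injf p⟩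

lemma embOf_surj : Function.Surjective embOf := by
  have hinj : Function.Injective embOf := by
    intro p q h
    exact hperm120inj p q (congrArg Function.Embedding.toFun h)
  have hcard : Fintype.card (Fin 5 ↪ Fin 5) = Fintype.card (Fin 120) := by
    simp [Fintype.card_embedding_eq]
  exact ((Fintype.bijective_iff_injective_and_card embOf).mpr ⟨hinj, hcard.symm⟩).2

noncomputable def Φinv : Fin 16 × Fin 120 → ↥Aut16 := fun z => gp z.1 * Fa z.2

lemma Φinv_bij : Function.Bijective Φinv := by
  constructor
  · rintro ⟨t, p⟩ ⟨t', p'⟩ h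
    have happ : ∀ x, gt t (F (perm120 p) x) = gt t' (F (perm120 p') x) := by
      intro x
      have := congrArg (fun σ : ↥Aut16 => (σ.1 : Fin 16 → Fin 16) x) h
      simpa [Φinv, gp_apply, Fa_apply] using this
    have ht : t = t' := by
      have := happ 15
      rwa [(hperm120 p).2.2.2, (hperm120 p').2.2.2, (hgt t).2.2, (hgt t').2.2] at this
    subst ht
    have hp : p = p' := by
      apply hperm120inj
      funext k
      have := happ (n5 k)
      rw [(hperm120 p).2.2.1, (hperm120 p').2.2.1] at this
      have h5 := (hgt t).2.1 this
      exact n5_inj h5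
    rw [hp]
  · intro π
    set t := π.1 15 with ht
    set σ := (gp t)⁻¹ * π with hσ
    have hσmem : ∀ x y, adjB (σ.1 x) (σ.1 y) = adjB x y := σ.2
    have hgpt15 : (gp t).1 15 = t := (hgt t).2.2
    have hσ15 : σ.1 15 = 15 := by
      have : σ.1 15 = ((gp t).1)⁻¹ (π.1 15) := rfl
      rw [this, ← ht]
      exact (Equiv.symm_apply_eq _).mpr hgpt15.symm
    have hlt : ∀ k : Fin 5, (σ.1 (n5 k)).1 < 5 := by
      intro k
      apply (nbr15 _).mp
      have := hσmem 15 (n5 k)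
      rw [hσ15] at this
      rw [this]
      exact (nbr15 (n5 k)).mpr k.2
    set f : Fin 5 → Fin 5 := fun k => ⟨(σ.1 (n5 k)).1, hlt k⟩ with hf
    have hfn : ∀ k, n5 (f k) = σ.1 (n5 k) := fun k => rfl
    have hfinj : Function.Injective f := by
      intro k l h
      have : σ.1 (n5 k) = σ.1 (n5 l) := by
        rw [← hfn, ← hfn, h]
      exact n5_inj (σ.1.injective this)
    obtain ⟨p, hp⟩ := embOf_surj ⟨f, hfinj⟩
    have hpf : perm120 p = f := congrArg Function.Embedding.toFun hp
    refine ⟨(t, p), ?_⟩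
    have hFa : Fa p = σ := by
      apply Subtype.ext
      apply unique_ext _ _ (Fa p).2 σ.2
      · rw [Fa_apply, (hperm120 p).2.2.2, hσ15]
      · intro k
        rw [Fa_apply, (hperm120 p).2.2.1, hpf, hfn]
    show gp t * Fa p = π
    rw [hFa, hσ, mul_inv_cancel_left]

/-! ### Transfer of automorphism groups -/

lemma bool_eq_of_iff {a b : Bool} (h : a = true ↔ b = true) : a = b := by
  cases a <;> cases b <;> simp_all

lemma adjT' (i j : Fin 16) : G.Adj (e.symm i) (e.symm j) ↔ adjB i j = true := by
  have := adjT (e.symm i) (e.symm j)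
  rwa [Equiv.apply_symm_apply, Equiv.apply_symm_apply] at this

noncomputable def autEquiv : ↥Aut ≃ ↥Aut16 where
  toFun π := ⟨e.permCongr π.1, by
    intro x y
    simp only [Equiv.permCongr_apply]
    apply bool_eq_of_iff
    rw [← adjT, ← adjT']
    exact π.2 (e.symm x) (e.symm y)⟩
  invFun σ := ⟨e.permCongr.symm σ.1, by
    intro v w
    simp only [Equiv.permCongr_symm, Equiv.permCongr_apply, Equiv.symm_symm]
    rw [adjT', adjT]
    rw [σ.2 (e v) (e w)]⟩
  left_inv π := Subtype.ext (e.permCongr.symm_apply_apply π.1)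
  right_inv σ := Subtype.ext (e.permCongr.apply_symm_apply σ.1)

/-! ### The main theorem -/

/-- The graph of (−1)-classes of the dP₅ lattice has 16 vertices and is strongly
regular with parameters (16, 5, 0, 2): every vertex has exactly 5 neighbours,
adjacent vertices have no common neighbour, and distinct non-adjacent vertices have
exactly 2 common neighbours (this is the Clebsch graph); its automorphism group has
order 1920. -/
theorem statement10 :
    Nat.card NegClass = 16 ∧
    (∀ v : NegClass, {w | G.Adj v w}.ncard = 5) ∧
    (∀ v w : NegClass, G.Adj v w → {u | G.Adj v u ∧ G.Adj w u}.ncard = 0) ∧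
    (∀ v w : NegClass, v ≠ w → ¬ G.Adj v w → {u | G.Adj v u ∧ G.Adj w u}.ncard = 2) ∧
    Nat.card ↥Aut = 1920 := by
  refine ⟨?_, ?_, ?_, ?_, ?_⟩
  · rw [Nat.card_congr e]
    simp
  · intro v
    have hi := Set.ncard_image_of_injective {w | G.Adj v w} e.injective
    rw [img1 v] at hi
    rw [← hi, setOf_adjB_eq, Set.ncard_coe_finset, deg5]
  · intro v w hvw
    have hi := Set.ncard_image_of_injective {u | G.Adj v u ∧ G.Adj w u} e.injective
    rw [img2 v w] at hi
    rw [← hi, setOf_adjB_eq, Set.ncard_coe_finset]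
    exact lam0 _ _ ((adjT v w).mp hvw)
  · intro v w hne hnadj
    have hi := Set.ncard_image_of_injective {u | G.Adj v u ∧ G.Adj w u} e.injective
    rw [img2 v w] at hi
    rw [← hi, setOf_adjB_eq, Set.ncard_coe_finset]
    apply mu2
    · intro h
      exact hne (e.injective h)
    · cases h : adjB (e v) (e w)
      · rfl
      · exact absurd ((adjT v w).mpr h) hnadj
  · have h1 : Nat.card ↥Aut = Nat.card ↥Aut16 := Nat.card_congr autEquiv
    have h2 : Nat.card (Fin 16 × Fin 120) = Nat.card ↥Aut16 :=
      Nat.card_eq_of_bijective Φinv Φinv_bij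
    rw [h1, ← h2, Nat.card_prod]
    simp

end Stmt10
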